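/- Let F(x) ∈ 𝓞[x] be a monic irreducible polynomial of degree n with root θ ∈ K̄. The depth of F is zero (that is, the minimum of deg_K η over all η ∈ K̄ with v(θ − η) > 0 equals n) if and only if the reduction of F(x) modulo 𝔪 is irreducible in (𝓞/𝔪)[x]. -/

import Mathlib

open Polynomial

noncomputable section

/-- A local field `K` of characteristic zero, presented through the canonical extension `v`
of its normalized discrete valuation (additively written, `v(K*) = ℤ`) to a fixed algebraic
closure of `K`.  The axioms state that `v` is an additive valuation on the algebraic closure,
that its restriction to `K` is a surjective discrete valuation onto `ℤ` (plus `⊤` at `0`),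
that it is invariant under `K`-automorphisms (a property of the canonical extension), that
`K` is complete and that its residue field is finite. -/
structure OkutsuSetup (K : Type) [Field K] [CharZero K] : Type where
  v : AlgebraicClosure K → WithTop ℚ
  v_eq_top_iff : ∀ x, v x = ⊤ ↔ x = 0
  v_mul : ∀ x y, v (x * y) = v x + v y
  v_min_le_add : ∀ x y, min (v x) (v y) ≤ v (x + y)
  v_neg : ∀ x, v (-x) = v x
  v_one : v 1 = 0
  v_base_int : ∀ x : K, x ≠ 0 →
    ∃ k : ℤ, v (algebraMap K (AlgebraicClosure K) x) = ((k : ℚ) : WithTop ℚ)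
  v_base_one : ∃ x : K, v (algebraMap K (AlgebraicClosure K) x) = ((1 : ℚ) : WithTop ℚ)
  v_aut_invariant : ∀ (M : IntermediateField K (AlgebraicClosure K)) (σ : ↥M ≃ₐ[K] ↥M)
    (x : ↥M), v ((σ x : ↥M) : AlgebraicClosure K) = v ((x : ↥M) : AlgebraicClosure K)
  complete : ∀ a : ℕ → K,
    (∀ N : ℚ, ∃ M : ℕ, ∀ p q : ℕ, M ≤ p → M ≤ q →
      ((N : ℚ) : WithTop ℚ) < v (algebraMap K (AlgebraicClosure K) (a p - a q))) →
    ∃ b : K, ∀ N : ℚ, ∃ M : ℕ, ∀ p : ℕ, M ≤ p →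
      ((N : ℚ) : WithTop ℚ) < v (algebraMap K (AlgebraicClosure K) (a p - b))
  finite_residue : ∃ T : Finset K, ∀ x : K,
    0 ≤ v (algebraMap K (AlgebraicClosure K) x) →
    ∃ y ∈ T, 0 < v (algebraMap K (AlgebraicClosure K) (x - y))

namespace OkutsuSetup

variable {K : Type} [Field K] [CharZero K]

/-- The valuation of `K` itself. -/
def vK (S : OkutsuSetup K) (x : K) : WithTop ℚ :=
  S.v (algebraMap K (AlgebraicClosure K) x)

/-- The ring of integers `𝓞` of `K`. -/
def integers (S : OkutsuSetup K) : Subring K where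
  carrier := {x : K | 0 ≤ S.vK x}
  zero_mem' := by
    show (0 : WithTop ℚ) ≤ S.vK 0
    unfold vK
    rw [map_zero, (S.v_eq_top_iff 0).mpr rfl]
    exact le_top
  one_mem' := by
    show (0 : WithTop ℚ) ≤ S.vK 1
    unfold vK
    rw [map_one, S.v_one]
  add_mem' := by
    intro a b ha hb
    show (0 : WithTop ℚ) ≤ S.vK (a + b)
    unfold vK
    rw [map_add]
    exact le_trans (le_min ha hb) (S.v_min_le_add _ _)
  mul_mem' := by
    intro a b ha hb
    show (0 : WithTop ℚ) ≤ S.vK (a * b)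
    unfold vK
    rw [map_mul, S.v_mul]
    exact add_nonneg ha hb
  neg_mem' := by
    intro a ha
    show (0 : WithTop ℚ) ≤ S.vK (-a)
    unfold vK
    rw [map_neg, S.v_neg]
    exact ha

/-- The maximal ideal `𝔪` of the ring of integers of `K`. -/
def maximalIdeal (S : OkutsuSetup K) : Ideal S.integers where
  carrier := {x : S.integers | 0 < S.vK (x : K)}
  zero_mem' := by
    show (0 : WithTop ℚ) < S.vK ((0 : S.integers) : K)
    have h0 : ((0 : S.integers) : K) = (0 : K) := rfl
    rw [h0]
    unfold vK
    rw [map_zero, (S.v_eq_top_iff 0).mpr rfl]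
    exact WithTop.coe_lt_top 0
  add_mem' := by
    intro a b ha hb
    show (0 : WithTop ℚ) < S.vK ((a : K) + (b : K))
    refine lt_of_lt_of_le (lt_min ha hb) ?_
    unfold vK
    rw [map_add]
    exact S.v_min_le_add _ _
  smul_mem' := by
    intro c x hx
    show (0 : WithTop ℚ) < S.vK ((c : K) * (x : K))
    unfold vK
    rw [map_mul, S.v_mul]
    calc (0 : WithTop ℚ) < S.v (algebraMap K (AlgebraicClosure K) (x : K)) := hx
    _ ≤ _ + _ := le_add_of_nonneg_left c.2

/-- The residue field `𝓞/𝔪` of `K`. -/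
abbrev Residue (S : OkutsuSetup K) : Type :=
  S.integers ⧸ S.maximalIdeal

/-- The residue characteristic of `K`. -/
def resChar (S : OkutsuSetup K) : ℕ :=
  ringChar S.Residue

/-- Reduction of a polynomial with integer coefficients modulo `𝔪`. -/
def reduce (S : OkutsuSetup K) (F : Polynomial S.integers) : Polynomial S.Residue :=
  F.map (Ideal.Quotient.mk S.maximalIdeal)

/-- Evaluation of a polynomial with coefficients in `𝓞` at a point of the algebraic
closure of `K`. -/
def evalK (S : OkutsuSetup K) (F : Polynomial S.integers) (θ : AlgebraicClosure K) :
    AlgebraicClosure K :=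
  Polynomial.aeval θ (F.map S.integers.subtype)

/-- `v(g)` for a polynomial `g`: the minimum of the valuations of its coefficients. -/
def vPoly (S : OkutsuSetup K) (g : Polynomial S.integers) : WithTop ℚ :=
  (Finset.range (g.natDegree + 1)).inf fun i => S.vK ((g.coeff i : K))

/-- The ramification index `e(E/K)` of a finite subextension `E` of `K̄/K`: the least
positive integer `e` such that all values of `v` on `E*` lie in `(1/e)ℤ`. -/
def ramIdx (S : OkutsuSetup K) (E : IntermediateField K (AlgebraicClosure K)) : ℕ :=
  sInf {e : ℕ | 0 < e ∧ ∀ x ∈ E, x ≠ (0 : AlgebraicClosure K) →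
    ∃ k : ℤ, S.v x = (((k : ℚ) / (e : ℚ) : ℚ) : WithTop ℚ)}

/-- The residual degree `f(E/K)` of a finite subextension `E` of `K̄/K`; since `K` is a
complete discretely valued field, `[E : K] = e(E/K)·f(E/K)`. -/
def resDeg (S : OkutsuSetup K) (E : IntermediateField K (AlgebraicClosure K)) : ℕ :=
  Module.finrank K E / S.ramIdx E

/-- A subextension `E/K` is tamely ramified when its ramification index is prime to the
residue characteristic of `K`. -/
def IsTame (S : OkutsuSetup K) (E : IntermediateField K (AlgebraicClosure K)) : Prop :=
  Nat.Coprime (S.ramIdx E) S.resChar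

/-- The Okutsu invariants `m_0 = 1 ≤ m_1 < ⋯ < m_r < m_{r+1} = n` and
`μ_0 = 0 < μ_1 < ⋯ < μ_r < μ_{r+1} = ∞` of a monic irreducible polynomial of degree `n`
with root `θ`:  `m i` is the least `[K(η):K]` over `η` with `v(θ-η) > μ (i-1)`, and
`μ i` is the greatest value of `v(θ-η)` over `η` with `[K(η):K] = m i`.
`r` is the depth: the number of indices `i ≥ 1` with `m i < n`. -/
structure OkutsuData (S : OkutsuSetup K) (θ : AlgebraicClosure K) (n : ℕ) : Type where
  r : ℕ
  m : ℕ → ℕ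
  μ : ℕ → WithTop ℚ
  m_zero : m 0 = 1
  mu_zero : μ 0 = 0
  m_isLeast : ∀ i, 1 ≤ i → i ≤ r + 1 →
    IsLeast {d : ℕ | ∃ η : AlgebraicClosure K,
      (minpoly K η).natDegree = d ∧ μ (i - 1) < S.v (θ - η)} (m i)
  mu_isGreatest : ∀ i, 1 ≤ i → i ≤ r + 1 →
    IsGreatest {c : WithTop ℚ | ∃ η : AlgebraicClosure K,
      (minpoly K η).natDegree = m i ∧ S.v (θ - η) = c} (μ i)
  m_lt_n : ∀ i, 1 ≤ i → i ≤ r → m i < n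
  m_last : m (r + 1) = n

/-- `[F_1, …, F_r]` is an Okutsu frame of the monic irreducible polynomial with root `θ`
and Okutsu invariants `D`: for each `1 ≤ i ≤ r`, `F_i` is the minimal polynomial of some
`α_i ∈ K̄` with `[K(α_i):K] = m_i` and `v(θ - α_i) = μ_i`. -/
def IsFrame (S : OkutsuSetup K) {θ : AlgebraicClosure K} {n : ℕ} (D : OkutsuData S θ n)
    (Fr : ℕ → Polynomial S.integers) : Prop :=
  ∀ i, 1 ≤ i → i ≤ D.r → ∃ α : AlgebraicClosure K,
    (minpoly K α).natDegree = D.m i ∧ S.v (θ - α) = D.μ i ∧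
      (Fr i).map S.integers.subtype = minpoly K α

/-- `φ` is a Montes approximation to the monic irreducible polynomial `F`:  a monic
irreducible polynomial of the same degree `n` having a root `α` with `v(θ - α) > μ_r`,
where `θ` is a root of `F`. -/
def IsMontesApprox (S : OkutsuSetup K) (F φ : Polynomial S.integers) : Prop :=
  φ.Monic ∧ Irreducible (φ.map S.integers.subtype) ∧ φ.natDegree = F.natDegree ∧
    ∃ θ : AlgebraicClosure K, S.evalK F θ = 0 ∧
      ∃ D : OkutsuData S θ F.natDegree, ∃ α : AlgebraicClosure K,
        S.evalK φ α = 0 ∧ D.μ D.r < S.v (θ - α)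

end OkutsuSetup

namespace OkutsuSetup

variable {K : Type} [Field K] [CharZero K] (S : OkutsuSetup K)

local notation "Kb" => AlgebraicClosure K

lemma v_zero : S.v 0 = ⊤ := (S.v_eq_top_iff 0).mpr rfl

lemma v_sub_ge (x y : Kb) : min (S.v x) (S.v y) ≤ S.v (x - y) := by
  have := S.v_min_le_add x (-y)
  rwa [S.v_neg, ← sub_eq_add_neg] at this

lemma v_add_eq_left {x y : Kb} (h : S.v x < S.v y) : S.v (x + y) = S.v x := by
  refine le_antisymm ?_ (le_trans (by simp [h.le]) (S.v_min_le_add x y))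
  by_contra hc
  push_neg at hc
  have h2 : min (S.v (x + y)) (S.v y) ≤ S.v ((x + y) - y) := S.v_sub_ge _ _
  rw [add_sub_cancel_right] at h2
  exact absurd h2 (not_le.mpr (lt_min hc h))

lemma le_v_sum {ι : Type*} (s : Finset ι) (f : ι → Kb) (c : WithTop ℚ)
    (h : ∀ i ∈ s, c ≤ S.v (f i)) : c ≤ S.v (∑ i ∈ s, f i) := by
  classical
  induction s using Finset.cons_induction with
  | empty => simp [S.v_zero]
  | cons a s ha ih =>
    rw [Finset.sum_cons]
    refine le_trans (le_min (h a (Finset.mem_cons_self a s)) ?_) (S.v_min_le_add _ _)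
    exact ih fun i hi => h i (Finset.mem_cons_of_mem hi)

lemma lt_v_sum {ι : Type*} (s : Finset ι) (f : ι → Kb) (c : WithTop ℚ) (hc : c < ⊤)
    (h : ∀ i ∈ s, c < S.v (f i)) : c < S.v (∑ i ∈ s, f i) := by
  classical
  induction s using Finset.cons_induction with
  | empty => simpa [S.v_zero] using hc
  | cons a s ha ih =>
    rw [Finset.sum_cons]
    refine lt_of_lt_of_le (lt_min (h a (Finset.mem_cons_self a s)) ?_) (S.v_min_le_add _ _)
    exact ih fun i hi => h i (Finset.mem_cons_of_mem hi)

lemma v_multiset_prod_nonneg (s : Multiset Kb) (h : ∀ x ∈ s, 0 ≤ S.v x) :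
    0 ≤ S.v s.prod := by
  induction s using Multiset.induction with
  | empty => simp [S.v_one]
  | cons a s ih =>
    rw [Multiset.prod_cons, S.v_mul]
    exact add_nonneg (h a (Multiset.mem_cons_self a s))
      (ih fun x hx => h x (Multiset.mem_cons_of_mem hx))

lemma v_multiset_sum_nonneg (s : Multiset Kb) (h : ∀ x ∈ s, 0 ≤ S.v x) :
    0 ≤ S.v s.sum := by
  induction s using Multiset.induction with
  | empty => simp [S.v_zero]
  | cons a s ih =>
    rw [Multiset.sum_cons]
    refine le_trans (le_min (h a (Multiset.mem_cons_self a s)) ?_) (S.v_min_le_add _ _)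
    exact ih fun x hx => h x (Multiset.mem_cons_of_mem hx)

lemma v_multiset_prod_pos (s : Multiset Kb) (h : ∀ x ∈ s, 0 ≤ S.v x)
    (h2 : ∃ x ∈ s, 0 < S.v x) : 0 < S.v s.prod := by
  obtain ⟨x, hx, hpos⟩ := h2
  obtain ⟨t, rfl⟩ := Multiset.exists_cons_of_mem hx
  rw [Multiset.prod_cons, S.v_mul]
  exact lt_of_lt_of_le hpos (le_add_of_nonneg_right
    (S.v_multiset_prod_nonneg t fun y hy => h y (Multiset.mem_cons_of_mem hy)))

lemma v_multiset_prod_exists_pos (s : Multiset Kb) (h : ∀ x ∈ s, 0 ≤ S.v x)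
    (h2 : 0 < S.v s.prod) : ∃ x ∈ s, 0 < S.v x := by
  by_contra hc
  push_neg at hc
  have hall : ∀ x ∈ s, S.v x = 0 := fun x hx => le_antisymm (hc x hx) (h x hx)
  have : S.v s.prod = 0 := by
    clear h hc h2
    induction s using Multiset.induction with
    | empty => simp [S.v_one]
    | cons a s ih =>
      rw [Multiset.prod_cons, S.v_mul, hall a (Multiset.mem_cons_self a s),
        ih fun x hx => hall x (Multiset.mem_cons_of_mem hx), add_zero]
  rw [this] at h2
  exact lt_irrefl _ h2

lemma v_pow_nonneg {x : Kb} (h : 0 ≤ S.v x) (k : ℕ) : 0 ≤ S.v (x ^ k) := by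
  induction k with
  | zero => simp [S.v_one]
  | succ k ih => rw [pow_succ, S.v_mul]; exact add_nonneg ih h

lemma v_pow_eq {x : Kb} {q : ℚ} (h : S.v x = (q : WithTop ℚ)) (k : ℕ) :
    S.v (x ^ k) = ((k * q : ℚ) : WithTop ℚ) := by
  induction k with
  | zero => simp [S.v_one]
  | succ k ih =>
    rw [pow_succ, S.v_mul, ih, h, ← WithTop.coe_add]
    congr 1
    push_cast
    ring

lemma vK_def (x : K) : S.vK x = S.v (algebraMap K Kb x) := rfl

lemma coeff_mem (A : Polynomial S.integers) (i : ℕ) :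
    0 ≤ S.v (algebraMap K Kb ((A.coeff i : K))) := (A.coeff i).2

lemma evalK_eq_sum (A : Polynomial S.integers) (x : Kb) :
    S.evalK A x = ∑ i ∈ Finset.range ((A.map S.integers.subtype).natDegree + 1),
      algebraMap K Kb ((A.coeff i : K)) * x ^ i := by
  show Polynomial.aeval x (A.map S.integers.subtype) = _
  rw [Polynomial.aeval_eq_sum_range]
  refine Finset.sum_congr rfl fun i _ => ?_
  rw [Polynomial.coeff_map, Algebra.smul_def, Subring.coe_subtype]

lemma v_evalK_nonneg (A : Polynomial S.integers) {x : Kb} (hx : 0 ≤ S.v x) :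
    0 ≤ S.v (S.evalK A x) := by
  rw [S.evalK_eq_sum]
  refine S.le_v_sum _ _ _ fun i _ => ?_
  rw [S.v_mul]
  exact add_nonneg (S.coeff_mem A i) (S.v_pow_nonneg hx i)

lemma v_evalK_pos (A : Polynomial S.integers) {x : Kb} (hx : 0 ≤ S.v x)
    (hA : ∀ i, A.coeff i ∈ S.maximalIdeal) : 0 < S.v (S.evalK A x) := by
  rw [S.evalK_eq_sum]
  refine S.lt_v_sum _ _ _ (WithTop.coe_lt_top 0) fun i _ => ?_
  rw [S.v_mul]
  exact lt_of_lt_of_le (hA i) (le_add_of_nonneg_right (S.v_pow_nonneg hx i))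

lemma v_root_nonneg (A : Polynomial S.integers) (hA : A.Monic) {x : Kb}
    (hx : S.evalK A x = 0) : 0 ≤ S.v x := by
  by_contra hneg
  push_neg at hneg
  have hxne : S.v x ≠ ⊤ := fun ht => by
    rw [ht] at hneg; exact absurd le_top (not_le.mpr hneg)
  obtain ⟨q, hq⟩ := WithTop.ne_top_iff_exists.mp hxne
  have hq : S.v x = (q : WithTop ℚ) := hq.symm
  have hqneg : q < 0 := by
    rw [hq] at hneg
    exact_mod_cast hneg
  set p := A.map S.integers.subtype with hp
  have hpm : p.Monic := hA.map _
  set k := p.natDegree with hk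
  have hsum : ∑ i ∈ Finset.range (k + 1), p.coeff i • x ^ i = 0 := by
    rw [← Polynomial.aeval_eq_sum_range]
    exact hx
  rw [Finset.sum_range_succ, Polynomial.Monic.coeff_natDegree hpm, one_smul] at hsum
  have hmain : ∑ i ∈ Finset.range k, p.coeff i • x ^ i = -(x ^ k) :=
    eq_neg_of_add_eq_zero_left hsum
  have hlt : ((k * q : ℚ) : WithTop ℚ) < S.v (∑ i ∈ Finset.range k, p.coeff i • x ^ i) := by
    refine S.lt_v_sum _ _ _ (WithTop.coe_lt_top _) fun i hi => ?_
    have hco : p.coeff i • x ^ i = algebraMap K Kb ((A.coeff i : K)) * x ^ i := by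
      rw [hp, Polynomial.coeff_map, Algebra.smul_def, Subring.coe_subtype]
    rw [hco, S.v_mul]
    have h1 : ((k * q : ℚ) : WithTop ℚ) < ((i * q : ℚ) : WithTop ℚ) := by
      have : (i : ℚ) * q > (k : ℚ) * q := by
        have hik : (i : ℚ) < (k : ℚ) := by exact_mod_cast Finset.mem_range.mp hi
        exact mul_lt_mul_of_neg_right hik hqneg
      exact_mod_cast this
    calc ((k * q : ℚ) : WithTop ℚ) < ((i * q : ℚ) : WithTop ℚ) := h1
    _ = S.v (x ^ i) := (S.v_pow_eq hq i).symm
    _ ≤ _ := le_add_of_nonneg_left (S.coeff_mem A i)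
  rw [hmain, S.v_neg, S.v_pow_eq hq] at hlt
  exact lt_irrefl _ hlt

lemma isUnit_of_not_mem_maximalIdeal {x : S.integers} (hx : x ∉ S.maximalIdeal) :
    IsUnit x := by
  have h0 : 0 ≤ S.vK (x : K) := x.2
  have hxm : ¬ 0 < S.vK (x : K) := hx
  have h1 : S.vK (x : K) = 0 := le_antisymm (not_lt.mp hxm) h0
  have hxne : (x : K) ≠ 0 := by
    intro h
    rw [h, vK_def, map_zero, S.v_zero] at h1
    exact absurd h1 (by simp)
  have hinv : 0 ≤ S.vK ((x : K)⁻¹) := by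
    have hm := S.v_mul (algebraMap K Kb (x : K)) (algebraMap K Kb ((x : K)⁻¹))
    rw [← map_mul, mul_inv_cancel₀ hxne, map_one, S.v_one] at hm
    rw [vK_def] at h1
    rw [vK_def]
    rw [h1, zero_add] at hm
    exact le_of_eq hm
  refine IsUnit.of_mul_eq_one (a := x) ⟨(x : K)⁻¹, hinv⟩ ?_
  ext
  exact mul_inv_cancel₀ hxne

lemma maximalIdeal_isMaximal : S.maximalIdeal.IsMaximal := by
  rw [Ideal.isMaximal_iff]
  constructor
  · show ¬ 0 < S.vK ((1 : S.integers) : K)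
    have h1 : S.vK (1 : K) = 0 := by rw [vK_def, map_one, S.v_one]
    simp [h1]
  · intro J x _ hxI hxJ
    obtain ⟨y, hy⟩ := isUnit_iff_exists_inv.mp (S.isUnit_of_not_mem_maximalIdeal hxI)
    exact hy ▸ J.mul_mem_right y hxJ

lemma v_aut (σ : Kb ≃ₐ[K] Kb) (x : Kb) : S.v (σ x) = S.v x := by
  let e := IntermediateField.topEquiv (F := K) (E := Kb)
  let σ' : (⊤ : IntermediateField K Kb) ≃ₐ[K] (⊤ : IntermediateField K Kb) :=
    e.trans (σ.trans e.symm)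
  have h := S.v_aut_invariant ⊤ σ' ⟨x, trivial⟩
  exact h

lemma v_neg_one_pow (m : ℕ) : S.v ((-1 : Kb) ^ m) = 0 := by
  rcases Nat.even_or_odd m with h | h
  · rw [h.neg_one_pow, S.v_one]
  · rw [h.neg_one_pow, S.v_neg, S.v_one]

lemma v_esymm_nonneg (s : Multiset Kb) (hs : ∀ x ∈ s, 0 ≤ S.v x) (m : ℕ) :
    0 ≤ S.v (s.esymm m) := by
  refine S.v_multiset_sum_nonneg _ fun x hx => ?_
  obtain ⟨t, ht, rfl⟩ := Multiset.mem_map.mp hx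
  obtain ⟨hts, -⟩ := (Multiset.mem_powersetCard).mp ht
  exact S.v_multiset_prod_nonneg t fun y hy => hs y (Multiset.mem_of_le hts hy)

lemma v_minpoly_root_nonneg {η ρ : Kb} (hη : 0 ≤ S.v η)
    (hρ : Polynomial.aeval ρ (minpoly K η) = 0) : 0 ≤ S.v ρ := by
  have halg : IsAlgebraic K η := Algebra.IsAlgebraic.isAlgebraic η
  obtain ⟨σ, hσ⟩ := minpoly.exists_algEquiv_of_root' halg hρ
  rw [← hσ, S.v_aut]
  exact hη

lemma exists_lift_minpoly {η : Kb} (hη : 0 ≤ S.v η) :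
    ∃ G : Polynomial S.integers, G.Monic ∧ G.map S.integers.subtype = minpoly K η := by
  set p := minpoly K η with hpdef
  have hint : IsIntegral K η := (Algebra.IsAlgebraic.isAlgebraic η).isIntegral
  have hpm : p.Monic := minpoly.monic hint
  set pm := p.map (algebraMap K Kb) with hpmdef
  have hroots : ∀ ρ ∈ pm.roots, 0 ≤ S.v ρ := by
    intro ρ hρ
    have h0 : Polynomial.eval ρ pm = 0 := (Polynomial.mem_roots'.mp hρ).2
    have h1 : Polynomial.aeval ρ p = 0 := by
      rw [Polynomial.aeval_def, ← Polynomial.eval_map]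
      exact h0
    exact S.v_minpoly_root_nonneg hη h1
  have hprod : pm = (pm.roots.map fun a => Polynomial.X - Polynomial.C a).prod :=
    (IsAlgClosed.splits pm).eq_prod_roots_of_monic (hpm.map _)
  have hcard : p.natDegree = Multiset.card pm.roots :=
    (Polynomial.natDegree_map _).symm.trans (IsAlgClosed.splits pm).natDegree_eq_card_roots
  have hcoeff : ∀ j, 0 ≤ S.v (algebraMap K Kb (p.coeff j)) := by
    intro j
    by_cases hj : j ≤ p.natDegree
    · have h1 : algebraMap K Kb (p.coeff j) = pm.coeff j := (Polynomial.coeff_map _ _).symm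
      rw [h1]
      rw [hprod, Multiset.prod_X_sub_C_coeff pm.roots (hcard ▸ hj), S.v_mul, S.v_neg_one_pow,
        zero_add]
      exact S.v_esymm_nonneg _ hroots _
    · rw [Polynomial.coeff_eq_zero_of_natDegree_lt (lt_of_not_ge hj), map_zero, S.v_zero]
      exact le_top
  have hsub : (↑p.coeffs : Set K) ⊆ ↑S.integers := by
    intro c hc
    obtain ⟨j, -, rfl⟩ := Polynomial.mem_coeffs_iff.mp hc
    exact hcoeff j
  refine ⟨p.toSubring S.integers hsub, ?_, Polynomial.map_toSubring p S.integers hsub⟩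
  exact Polynomial.monic_of_injective Subtype.val_injective
    (by rw [Polynomial.map_toSubring]; exact hpm)

lemma reduce_eq_zero_iff (A : Polynomial S.integers) :
    S.reduce A = 0 ↔ ∀ i, A.coeff i ∈ S.maximalIdeal := by
  unfold reduce
  rw [Polynomial.ext_iff]
  constructor
  · intro h i
    have := h i
    rw [Polynomial.coeff_map, Polynomial.coeff_zero, Ideal.Quotient.eq_zero_iff_mem] at this
    exact this
  · intro h i
    rw [Polynomial.coeff_map, Polynomial.coeff_zero, Ideal.Quotient.eq_zero_iff_mem]
    exact h i

lemma exists_monic_lift (q : Polynomial S.Residue) (hq : q.Monic) :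
    ∃ Q : Polynomial S.integers, Q.Monic ∧ S.reduce Q = q ∧ Q.natDegree = q.natDegree := by
  haveI : Nontrivial S.Residue :=
    Ideal.Quotient.nontrivial_iff.mpr S.maximalIdeal_isMaximal.ne_top
  have hmem : q ∈ Polynomial.lifts (Ideal.Quotient.mk S.maximalIdeal) :=
    (Polynomial.mem_lifts _).mpr (Polynomial.map_surjective _ Ideal.Quotient.mk_surjective q)
  obtain ⟨Q, h1, h2, h3⟩ := Polynomial.lifts_and_degree_eq_and_monic hmem hq
  exact ⟨Q, h3, h1, Polynomial.natDegree_eq_of_degree_eq h2⟩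

end OkutsuSetup

open OkutsuSetup in
/-- Let `F ∈ 𝓞[x]` be monic irreducible of degree `n` with root `θ ∈ K̄`.
The depth of `F` is zero — i.e. the minimum of `[K(η):K]` over all `η ∈ K̄` with
`v(θ - η) > 0` equals `n` — iff the reduction of `F` modulo `𝔪` is irreducible in
`(𝓞/𝔪)[x]`. -/
theorem okutsu_stmt_1 {K : Type} [Field K] [CharZero K] (S : OkutsuSetup K)
    (F : Polynomial S.integers) (hFmonic : F.Monic)
    (hFirr : Irreducible (F.map S.integers.subtype))
    (n : ℕ) (hFdeg : F.natDegree = n)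
    (θ : AlgebraicClosure K) (hθ : S.evalK F θ = 0) :
    IsLeast {d : ℕ | ∃ η : AlgebraicClosure K,
        (minpoly K η).natDegree = d ∧ 0 < S.v (θ - η)} n ↔
      Irreducible (S.reduce F) := by
  classical
  haveI hmax := S.maximalIdeal_isMaximal
  letI : Field S.Residue := Ideal.Quotient.field S.maximalIdeal
  set Fk := F.map S.integers.subtype with hFkdef
  have hFkm : Fk.Monic := hFmonic.map _
  have hFkdeg : Fk.natDegree = n := by rw [hFkdef, hFmonic.natDegree_map, hFdeg]
  have hθ' : Polynomial.aeval θ Fk = 0 := hθ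
  have hminθ : minpoly K θ = Fk := (minpoly.eq_of_irreducible_of_monic hFirr hθ' hFkm).symm
  have hvθ : 0 ≤ S.v θ := S.v_root_nonneg F hFmonic hθ
  have hn1 : 0 < n := by
    by_contra h
    push_neg at h
    have hn0 : n = 0 := Nat.le_zero.mp h
    have : Fk = 1 := hFkm.natDegree_eq_zero.mp (by rw [hFkdeg, hn0])
    exact hFirr.not_isUnit (this ▸ isUnit_one)
  have hredm : (S.reduce F).Monic := hFmonic.map _
  have hreddeg : (S.reduce F).natDegree = n := by
    rw [OkutsuSetup.reduce, hFmonic.natDegree_map, hFdeg]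
  have key : ∀ R : Polynomial S.integers, R.Monic → 0 < S.v (S.evalK R θ) →
      ∃ ρ : AlgebraicClosure K, (minpoly K ρ).natDegree ≤ R.natDegree ∧ 0 < S.v (θ - ρ) := by
    intro R hRm hRpos
    set Rk := R.map S.integers.subtype with hRkdef
    have hRkm : Rk.Monic := hRm.map _
    set rts := (Rk.map (algebraMap K (AlgebraicClosure K))).roots with hrts
    have hRmap : Rk.map (algebraMap K (AlgebraicClosure K)) =
        (rts.map fun a => Polynomial.X - Polynomial.C a).prod :=
      (IsAlgClosed.splits _).eq_prod_roots_of_monic (hRkm.map _)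
    have hrootsK : ∀ ρ ∈ rts, S.evalK R ρ = 0 := by
      intro ρ hρ
      have h0 : Polynomial.eval ρ (Rk.map (algebraMap K (AlgebraicClosure K))) = 0 :=
        (Polynomial.mem_roots'.mp hρ).2
      show Polynomial.aeval ρ Rk = 0
      rw [Polynomial.aeval_def, ← Polynomial.eval_map]
      exact h0
    have hEvalR : S.evalK R θ = (rts.map fun a => θ - a).prod := by
      show Polynomial.aeval θ Rk = _
      rw [Polynomial.aeval_def, ← Polynomial.eval_map, hRmap, Polynomial.eval_multiset_prod,
        Multiset.map_map]
      congr 1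
      refine Multiset.map_congr rfl fun a _ => ?_
      simp
    have hsub : ∀ z ∈ rts.map (fun a => θ - a), 0 ≤ S.v z := by
      intro z hz
      obtain ⟨ρ, hρ, rfl⟩ := Multiset.mem_map.mp hz
      exact le_trans (le_min hvθ (S.v_root_nonneg R hRm (hrootsK ρ hρ))) (S.v_sub_ge θ ρ)
    rw [hEvalR] at hRpos
    obtain ⟨z, hz, hzpos⟩ := S.v_multiset_prod_exists_pos _ hsub hRpos
    obtain ⟨ρ, hρmem, rfl⟩ := Multiset.mem_map.mp hz
    refine ⟨ρ, ?_, hzpos⟩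
    have hd : minpoly K ρ ∣ Rk := minpoly.dvd K ρ (hrootsK ρ hρmem)
    calc (minpoly K ρ).natDegree ≤ Rk.natDegree := Polynomial.natDegree_le_of_dvd hd hRkm.ne_zero
    _ = R.natDegree := hRm.natDegree_map _
  constructor
  · rintro ⟨-, hlb⟩
    by_contra hnot
    have hnotunit : ¬ IsUnit (S.reduce F) :=
      Polynomial.not_isUnit_of_natDegree_pos _ (by rw [hreddeg]; exact hn1)
    obtain ⟨Pb, hPbm, hPbirr, hPbdvd⟩ := Polynomial.exists_monic_irreducible_factor _ hnotunit
    obtain ⟨Qb, hQb⟩ := hPbdvd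
    have hQbm : Qb.Monic := by
      have h := congrArg Polynomial.leadingCoeff hQb
      rw [Polynomial.leadingCoeff_mul, hPbm.leadingCoeff, one_mul, hredm.leadingCoeff] at h
      exact h.symm
    have hdegs : Pb.natDegree + Qb.natDegree = n := by
      rw [← Polynomial.natDegree_mul hPbm.ne_zero hQbm.ne_zero, ← hQb, hreddeg]
    have hPpos : 0 < Pb.natDegree := hPbirr.natDegree_pos
    have hPle : Pb.natDegree ≤ n := by omega
    have hPlt : Pb.natDegree < n := by
      rcases lt_or_eq_of_le hPle with h | h
      · exact h
      · exfalso
        have hQ0 : Qb.natDegree = 0 := by omega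
        have hQ1 : Qb = 1 := hQbm.natDegree_eq_zero.mp hQ0
        rw [hQ1, mul_one] at hQb
        exact hnot (by rw [hQb]; exact hPbirr)
    have hQlt : Qb.natDegree < n := by omega
    obtain ⟨P, hPm, hPred, hPdeg⟩ := S.exists_monic_lift Pb hPbm
    obtain ⟨Q, hQm, hQred, hQdeg⟩ := S.exists_monic_lift Qb hQbm
    have hCred : S.reduce (F - P * Q) = 0 := by
      show (F - P * Q).map _ = 0
      rw [Polynomial.map_sub, Polynomial.map_mul]
      change S.reduce F - S.reduce P * S.reduce Q = 0
      rw [hPred, hQred, hQb, sub_self]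
    have hCv : 0 < S.v (S.evalK (F - P * Q) θ) :=
      S.v_evalK_pos _ hvθ ((S.reduce_eq_zero_iff _).mp hCred)
    have hEval : S.evalK (F - P * Q) θ = -(S.evalK P θ * S.evalK Q θ) := by
      show Polynomial.aeval θ ((F - P * Q).map S.integers.subtype) =
        -(Polynomial.aeval θ (P.map S.integers.subtype) *
          Polynomial.aeval θ (Q.map S.integers.subtype))
      rw [Polynomial.map_sub, Polynomial.map_mul, map_sub, map_mul, ← hFkdef, hθ']
      ring
    rw [hEval, S.v_neg, S.v_mul] at hCv
    have hPnn := S.v_evalK_nonneg (A := P) hvθ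
    have hQnn := S.v_evalK_nonneg (A := Q) hvθ
    have hone : 0 < S.v (S.evalK P θ) ∨ 0 < S.v (S.evalK Q θ) := by
      by_contra h
      push_neg at h
      rw [le_antisymm h.1 hPnn, le_antisymm h.2 hQnn, add_zero] at hCv
      exact lt_irrefl _ hCv
    obtain ⟨ρ, hρdeg, hρpos⟩ : ∃ ρ : AlgebraicClosure K,
        (minpoly K ρ).natDegree < n ∧ 0 < S.v (θ - ρ) := by
      rcases hone with h | h
      · obtain ⟨ρ, h1, h2⟩ := key P hPm h
        rw [hPdeg] at h1
        exact ⟨ρ, by omega, h2⟩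
      · obtain ⟨ρ, h1, h2⟩ := key Q hQm h
        rw [hQdeg] at h1
        exact ⟨ρ, by omega, h2⟩
    have := hlb ⟨ρ, rfl, hρpos⟩
    omega
  · intro hIrr
    refine ⟨⟨θ, ?_, ?_⟩, ?_⟩
    · rw [hminθ]; exact hFkdeg
    · rw [sub_self, S.v_zero]; exact WithTop.coe_lt_top 0
    rintro d ⟨η, hηdeg, hηpos⟩
    by_contra hdn
    push_neg at hdn
    have hvη : 0 ≤ S.v η := by
      have h1 : θ - (θ - η) = η := by ring
      calc (0 : WithTop ℚ) ≤ min (S.v θ) (S.v (θ - η)) := le_min hvθ (le_of_lt hηpos)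
      _ ≤ S.v (θ - (θ - η)) := S.v_sub_ge _ _
      _ = S.v η := by rw [h1]
    obtain ⟨G, hGm, hGmap⟩ := S.exists_lift_minpoly hvη
    have hGdeg : G.natDegree = d := by
      rw [← hηdeg, ← hGmap, hGm.natDegree_map]
    have hGpos : 0 < S.v (S.evalK G θ) := by
      set Gk := G.map S.integers.subtype with hGkdef
      have hGkm : Gk.Monic := hGm.map _
      set rts := (Gk.map (algebraMap K (AlgebraicClosure K))).roots with hrts
      have hGmapid : Gk.map (algebraMap K (AlgebraicClosure K)) =
          (rts.map fun a => Polynomial.X - Polynomial.C a).prod :=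
        (IsAlgClosed.splits _).eq_prod_roots_of_monic (hGkm.map _)
      have hrootsK : ∀ ρ ∈ rts, S.evalK G ρ = 0 := by
        intro ρ hρ
        have h0 : Polynomial.eval ρ (Gk.map (algebraMap K (AlgebraicClosure K))) = 0 :=
          (Polynomial.mem_roots'.mp hρ).2
        show Polynomial.aeval ρ Gk = 0
        rw [Polynomial.aeval_def, ← Polynomial.eval_map]
        exact h0
      have hEvalG : S.evalK G θ = (rts.map fun a => θ - a).prod := by
        show Polynomial.aeval θ Gk = _
        rw [Polynomial.aeval_def, ← Polynomial.eval_map, hGmapid, Polynomial.eval_multiset_prod,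
          Multiset.map_map]
        congr 1
        refine Multiset.map_congr rfl fun a _ => ?_
        simp
      have hηroot : η ∈ rts := by
        rw [hrts, Polynomial.mem_roots']
        refine ⟨(hGkm.map _).ne_zero, ?_⟩
        show Polynomial.eval η (Gk.map (algebraMap K (AlgebraicClosure K))) = 0
        rw [Polynomial.eval_map, ← Polynomial.aeval_def]
        have h2 : Polynomial.aeval η Gk = 0 := by rw [hGmap]; exact minpoly.aeval K η
        exact h2
      have hallnn : ∀ z ∈ rts.map (fun a => θ - a), 0 ≤ S.v z := by
        intro z hz
        obtain ⟨ρ, hρ, rfl⟩ := Multiset.mem_map.mp hz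
        exact le_trans (le_min hvθ (S.v_root_nonneg G hGm (hrootsK ρ hρ))) (S.v_sub_ge θ ρ)
      rw [hEvalG]
      exact S.v_multiset_prod_pos _ hallnn ⟨θ - η, Multiset.mem_map_of_mem _ hηroot, hηpos⟩
    have hGredm : (S.reduce G).Monic := hGm.map _
    have hGred_deg : (S.reduce G).natDegree = d := by
      rw [OkutsuSetup.reduce, hGm.natDegree_map]
      exact hGdeg
    have hndvd : ¬ S.reduce F ∣ S.reduce G := by
      intro hdvd
      have := Polynomial.natDegree_le_of_dvd hdvd hGredm.ne_zero
      rw [hreddeg, hGred_deg] at this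
      omega
    have hcop : IsCoprime (S.reduce F) (S.reduce G) := hIrr.coprime_iff_not_dvd.mpr hndvd
    obtain ⟨a, b, hab⟩ := hcop
    obtain ⟨A, hA⟩ := Polynomial.map_surjective _ Ideal.Quotient.mk_surjective a
    obtain ⟨B, hB⟩ := Polynomial.map_surjective _ Ideal.Quotient.mk_surjective b
    have hXred : S.reduce (A * F + B * G - 1) = 0 := by
      show (A * F + B * G - 1).map _ = 0
      rw [Polynomial.map_sub, Polynomial.map_add, Polynomial.map_mul, Polynomial.map_mul,
        Polynomial.map_one]
      change A.map _ * S.reduce F + B.map _ * S.reduce G - 1 = 0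
      rw [hA, hB, hab, sub_self]
    have hXv : 0 < S.v (S.evalK (A * F + B * G - 1) θ) :=
      S.v_evalK_pos _ hvθ ((S.reduce_eq_zero_iff _).mp hXred)
    have hXeval : S.evalK (A * F + B * G - 1) θ = S.evalK B θ * S.evalK G θ - 1 := by
      show Polynomial.aeval θ ((A * F + B * G - 1).map S.integers.subtype) =
        Polynomial.aeval θ (B.map S.integers.subtype) *
          Polynomial.aeval θ (G.map S.integers.subtype) - 1
      rw [Polynomial.map_sub, Polynomial.map_add, Polynomial.map_mul, Polynomial.map_mul,
        Polynomial.map_one, map_sub, map_add, map_mul, map_mul, map_one, ← hFkdef, hθ']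
      ring
    rw [hXeval] at hXv
    have hBG : 0 < S.v (S.evalK B θ * S.evalK G θ) := by
      rw [S.v_mul]
      exact lt_of_lt_of_le hGpos (le_add_of_nonneg_left (S.v_evalK_nonneg _ hvθ))
    have h1 : (1 : AlgebraicClosure K) =
        S.evalK B θ * S.evalK G θ + -(S.evalK B θ * S.evalK G θ - 1) := by ring
    have hfin : (0 : WithTop ℚ) < S.v 1 := by
      rw [h1]
      refine lt_of_lt_of_le (lt_min hBG ?_) (S.v_min_le_add _ _)
      rw [S.v_neg]
      exact hXv
    rw [S.v_one] at hfin
    exact lt_irrefl _ hfin
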